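/- Let K ≥ 0 and let G : ℝ → ℝ be a measurable, nonnegative function vanishing on (−∞,0) such that ∫₀^∞ G(t) dt = 1 and G(t) ≤ K · t^{−3/2} for all t > 0. Then for every n ≥ 1 and every t > 0, the n-th convolution power satisfies G^{∗n}(t) ≤ K · n^{5/2} · t^{−3/2}. -/

import Mathlib

open Filter Set MeasureTheory

/-- Convolution of two functions vanishing on `(-∞,0)`:
`(f ∗ g)(t) = ∫₀ᵗ f(s) g(t-s) ds`. -/
noncomputable def conv (f g : ℝ → ℝ) : ℝ → ℝ :=
  fun t => ∫ s in (0:ℝ)..t, f s * g (t - s)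

/-- `convPow G n` is the `(n+1)`-st convolution power `G^{∗(n+1)}`:
`convPow G 0 = G` and `convPow G (n+1) = (convPow G n) ∗ G`. -/
noncomputable def convPow (G : ℝ → ℝ) : ℕ → ℝ → ℝ
  | 0 => G
  | n + 1 => conv (convPow G n) G

set_option linter.unusedSectionVars false

namespace ConvAux

lemma ae_ne_zero : ∀ᵐ x : ℝ, x ≠ 0 := by
  rw [ae_iff]
  have h : {x : ℝ | ¬x ≠ 0} = {(0:ℝ)} := by ext x; simp
  rw [h]
  exact measure_singleton 0

section

variable {G : ℝ → ℝ} (hm : Measurable G) (hz : ∀ t < (0:ℝ), G t = 0)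
  (hint : ∫⁻ t in Ioi (0:ℝ), ENNReal.ofReal (G t) = 1)

include hm hz hint

lemma mass_univ : ∫⁻ t, ENNReal.ofReal (G t) = 1 := by
  rw [← lintegral_add_compl (fun t => ENNReal.ofReal (G t))
    (measurableSet_Ioi (a := (0:ℝ)))]
  have h0 : ∫⁻ t in (Ioi (0:ℝ))ᶜ, ENNReal.ofReal (G t) = 0 := by
    rw [lintegral_eq_zero_iff hm.ennreal_ofReal]
    refine (ae_restrict_iff' measurableSet_Ioi.compl).2 ?_
    filter_upwards [ae_ne_zero] with x hx hxmem
    have hxle : x ≤ 0 := by simpa using hxmem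
    have : x < 0 := lt_of_le_of_ne hxle hx
    simp [hz x this]
  rw [hint, h0, add_zero]

lemma shift_le (s : ℝ) : ∫⁻ t in Ioi (0:ℝ), ENNReal.ofReal (G (t - s)) ≤ 1 := by
  have he : MeasurableEmbedding (fun x : ℝ => x - s) :=
    (MeasurableEquiv.subRight s).measurableEmbedding
  have hmp : MeasurePreserving (fun x : ℝ => x - s)
      (volume : Measure ℝ) volume := measurePreserving_sub_right volume s
  have hpre : (fun x : ℝ => x - s) ⁻¹' (Ioi (-s)) = Ioi 0 := by
    ext x
    simp only [mem_preimage, mem_Ioi]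
    constructor <;> intro h <;> linarith
  have hkey := hmp.setLIntegral_comp_preimage_emb he
    (fun u => ENNReal.ofReal (G u)) (Ioi (-s))
  rw [hpre] at hkey
  rw [hkey]
  exact (setLIntegral_le_lintegral _ _).trans (mass_univ hm hz hint).le

lemma reflect_le (t a : ℝ) : ∫⁻ x in Ioc a t, ENNReal.ofReal (G (t - x)) ≤ 1 := by
  have he : MeasurableEmbedding (fun x : ℝ => t - x) :=
    (MeasurableEquiv.subLeft t).measurableEmbedding
  have hmp : MeasurePreserving (fun x : ℝ => t - x)
      (volume : Measure ℝ) volume := Measure.measurePreserving_sub_left volume t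
  have hpre : (fun x : ℝ => t - x) ⁻¹' (Ico 0 (t - a)) = Ioc a t := by
    ext x
    simp only [mem_preimage, mem_Ico, mem_Ioc]
    constructor <;> intro h <;> exact ⟨by linarith [h.1, h.2], by linarith [h.1, h.2]⟩
  have hkey := hmp.setLIntegral_comp_preimage_emb he
    (fun u => ENNReal.ofReal (G u)) (Ico 0 (t - a))
  rw [hpre] at hkey
  rw [hkey]
  exact (setLIntegral_le_lintegral _ _).trans (mass_univ hm hz hint).le

lemma conv_neg {F : ℝ → ℝ} (hzF : ∀ u < (0:ℝ), F u = 0) {t : ℝ} (ht : t < 0) :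
    conv F G t = 0 := by
  have h1 : conv F G t = -∫ s in Ioc t 0, F s * G (t - s) :=
    intervalIntegral.integral_of_ge ht.le
  have h2 : ∫ s in Ioc t 0, F s * G (t - s) = 0 := by
    apply integral_eq_zero_of_ae
    refine (ae_restrict_iff' measurableSet_Ioc).2 ?_
    filter_upwards [ae_ne_zero] with s hs hmem
    have : s < 0 := lt_of_le_of_ne hmem.2 hs
    simp [hzF s this]
  rw [h1, h2, neg_zero]

lemma conv_measurable {F : ℝ → ℝ} (hmF : Measurable F) (hzF : ∀ u < (0:ℝ), F u = 0) :
    Measurable (conv F G) := by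
  have hfm : Measurable (fun q : ℝ × ℝ =>
      if 0 < q.2 ∧ q.2 ≤ q.1 then F q.2 * G (q.1 - q.2) else 0) := by
    refine Measurable.ite ?_ ?_ measurable_const
    · exact (measurableSet_lt measurable_const measurable_snd).inter
        (measurableSet_le measurable_snd measurable_fst)
    · exact (hmF.comp measurable_snd).mul (hm.comp (measurable_fst.sub measurable_snd))
  have key : conv F G = fun t => ∫ s, (fun q : ℝ × ℝ =>
      if 0 < q.2 ∧ q.2 ≤ q.1 then F q.2 * G (q.1 - q.2) else 0) (t, s) := by
    funext t
    show conv F G t = ∫ s, (if 0 < s ∧ s ≤ t then F s * G (t - s) else 0)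
    rcases lt_trichotomy t 0 with ht | rfl | ht
    · rw [conv_neg hm hz hint hzF ht]
      have h3 : ∀ s : ℝ, (if 0 < s ∧ s ≤ t then F s * G (t - s) else 0) = 0 := by
        intro s; rw [if_neg]; rintro ⟨h1', h2'⟩; linarith
      simp only [h3, integral_zero]
    · have h3 : ∀ s : ℝ, (if 0 < s ∧ s ≤ (0:ℝ) then F s * G (0 - s) else 0) = 0 := by
        intro s; rw [if_neg]; rintro ⟨h1', h2'⟩; linarith
      simp only [conv, intervalIntegral.integral_same, h3, integral_zero]
    · rw [show conv F G t = ∫ s in (0:ℝ)..t, F s * G (t - s) from rfl,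
        intervalIntegral.integral_of_le ht.le, ← integral_indicator measurableSet_Ioc]
      congr 1
      funext s
      by_cases hmem : s ∈ Ioc (0:ℝ) t
      · rw [indicator_of_mem hmem, if_pos ⟨hmem.1, hmem.2⟩]
      · rw [indicator_of_notMem hmem, if_neg (by simpa [mem_Ioc] using hmem)]
  rw [key]
  exact hfm.stronglyMeasurable.integral_prod_right'.measurable

lemma conv_nonneg' (hnn : ∀ u, 0 ≤ G u) {F : ℝ → ℝ} (hnnF : ∀ u, 0 ≤ F u)
    (hzF : ∀ u < (0:ℝ), F u = 0) (t : ℝ) : 0 ≤ conv F G t := by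
  rcases lt_trichotomy t 0 with ht | rfl | ht
  · rw [conv_neg hm hz hint hzF ht]
  · simp [conv, intervalIntegral.integral_same]
  · exact intervalIntegral.integral_nonneg ht.le
      (fun u _ => mul_nonneg (hnnF u) (hnn _))

lemma conv_mass (hnn : ∀ u, 0 ≤ G u) {F : ℝ → ℝ} (hmF : Measurable F)
    (hnnF : ∀ u, 0 ≤ F u)
    (hmassF : ∫⁻ u in Ioi (0:ℝ), ENNReal.ofReal (F u) ≤ 1) :
    ∫⁻ t in Ioi (0:ℝ), ENNReal.ofReal (conv F G t) ≤ 1 := by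
  have hpoint : ∀ t ∈ Ioi (0:ℝ), ENNReal.ofReal (conv F G t) ≤
      ∫⁻ s in Ioi (0:ℝ), ENNReal.ofReal (F s) * ENNReal.ofReal (G (t - s)) := by
    intro t ht
    have ht' : (0:ℝ) < t := ht
    have hconv : conv F G t = ∫ s in Ioc (0:ℝ) t, F s * G (t - s) :=
      intervalIntegral.integral_of_le ht'.le
    have step1 : ENNReal.ofReal (conv F G t) ≤
        ∫⁻ s in Ioc (0:ℝ) t, ENNReal.ofReal (F s * G (t - s)) := by
      rw [hconv]
      by_cases hI : IntegrableOn (fun s => F s * G (t - s)) (Ioc (0:ℝ) t) volume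
      · rw [ofReal_integral_eq_lintegral_ofReal hI
          (Eventually.of_forall fun s => mul_nonneg (hnnF s) (hnn _))]
      · rw [integral_undef hI]; simp
    refine step1.trans ?_
    have heq : ∀ s : ℝ, ENNReal.ofReal (F s * G (t - s)) =
        ENNReal.ofReal (F s) * ENNReal.ofReal (G (t - s)) :=
      fun s => ENNReal.ofReal_mul (hnnF s)
    simp only [heq]
    exact lintegral_mono_set Ioc_subset_Ioi_self
  calc ∫⁻ t in Ioi (0:ℝ), ENNReal.ofReal (conv F G t)
      ≤ ∫⁻ t in Ioi (0:ℝ), ∫⁻ s in Ioi (0:ℝ),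
          ENNReal.ofReal (F s) * ENNReal.ofReal (G (t - s)) :=
        lintegral_mono_ae ((ae_restrict_iff' measurableSet_Ioi).2
          (Eventually.of_forall hpoint))
    _ = ∫⁻ s in Ioi (0:ℝ), ∫⁻ t in Ioi (0:ℝ),
          ENNReal.ofReal (F s) * ENNReal.ofReal (G (t - s)) := by
        refine lintegral_lintegral_swap ?_
        exact (((hmF.comp measurable_snd).ennreal_ofReal).mul
          ((hm.comp (measurable_fst.sub measurable_snd)).ennreal_ofReal)).aemeasurable
    _ = ∫⁻ s in Ioi (0:ℝ), ENNReal.ofReal (F s) *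
          ∫⁻ t in Ioi (0:ℝ), ENNReal.ofReal (G (t - s)) := by
        refine lintegral_congr fun s => ?_
        exact lintegral_const_mul _
          ((hm.comp (measurable_id.sub measurable_const)).ennreal_ofReal)
    _ ≤ ∫⁻ s in Ioi (0:ℝ), ENNReal.ofReal (F s) * 1 :=
        lintegral_mono fun s => mul_le_mul_right (shift_le hm hz hint s) _
    _ = ∫⁻ s in Ioi (0:ℝ), ENNReal.ofReal (F s) := by simp
    _ ≤ 1 := hmassF

lemma conv_bound (hnn : ∀ u, 0 ≤ G u) {K c : ℝ} (hK : 0 ≤ K) (hc : 0 ≤ c)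
    {F : ℝ → ℝ} (hmF : Measurable F) (hnnF : ∀ u, 0 ≤ F u)
    (hmassF : ∫⁻ u in Ioi (0:ℝ), ENNReal.ofReal (F u) ≤ 1)
    (hbF : ∀ u, 0 < u → F u ≤ K * c * u ^ (-(3:ℝ)/2))
    (hb : ∀ u, 0 < u → G u ≤ K * u ^ (-(3:ℝ)/2))
    {t p : ℝ} (ht : 0 < t) (hp0 : 0 < p) (hp1 : p < 1) :
    conv F G t ≤ K * ((1 - p) * t) ^ (-(3:ℝ)/2)
      + (K * c) * (p * t) ^ (-(3:ℝ)/2) := by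
  set a := p * t with ha_def
  have ha0 : 0 < a := mul_pos hp0 ht
  have hat : a < t := by
    have : p * t < 1 * t := by
      exact mul_lt_mul_of_pos_right hp1 ht
    simpa [ha_def] using this
  have hta : t - a = (1 - p) * t := by rw [ha_def]; ring
  have hX : 0 ≤ K * ((1 - p) * t) ^ (-(3:ℝ)/2) :=
    mul_nonneg hK (Real.rpow_nonneg (by nlinarith) _)
  have hY : 0 ≤ (K * c) * (p * t) ^ (-(3:ℝ)/2) :=
    mul_nonneg (mul_nonneg hK hc) (Real.rpow_nonneg (by positivity) _)
  have hconv : conv F G t = ∫ s in Ioc (0:ℝ) t, F s * G (t - s) :=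
    intervalIntegral.integral_of_le ht.le
  by_cases hI : IntegrableOn (fun s => F s * G (t - s)) (Ioc (0:ℝ) t) volume
  swap
  · rw [hconv, integral_undef hI]; linarith
  rw [← ENNReal.ofReal_le_ofReal_iff (by linarith)]
  rw [hconv, ofReal_integral_eq_lintegral_ofReal hI
    (Eventually.of_forall fun s => mul_nonneg (hnnF s) (hnn _))]
  have hsplit : Ioc (0:ℝ) t = Ioc 0 a ∪ Ioc a t :=
    (Ioc_union_Ioc_eq_Ioc ha0.le hat.le).symm
  rw [hsplit, lintegral_union measurableSet_Ioc (Ioc_disjoint_Ioc_of_le le_rfl)]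
  have h1 : ∫⁻ s in Ioc (0:ℝ) a, ENNReal.ofReal (F s * G (t - s)) ≤
      ENNReal.ofReal (K * ((1 - p) * t) ^ (-(3:ℝ)/2)) := by
    have hba : ∀ s ∈ Ioc (0:ℝ) a, F s * G (t - s) ≤
        F s * (K * ((1 - p) * t) ^ (-(3:ℝ)/2)) := by
      intro s hs
      have hts : 0 < t - s := by have := hs.2; linarith
      have hG1 : G (t - s) ≤ K * (t - s) ^ (-(3:ℝ)/2) := hb _ hts
      have hG2 : (t - s) ^ (-(3:ℝ)/2) ≤ ((1 - p) * t) ^ (-(3:ℝ)/2) := by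
        rw [← hta]
        refine Real.rpow_le_rpow_of_nonpos (by linarith) (by linarith [hs.2]) (by norm_num)
      exact mul_le_mul_of_nonneg_left
        (hG1.trans (mul_le_mul_of_nonneg_left hG2 hK)) (hnnF s)
    calc ∫⁻ s in Ioc (0:ℝ) a, ENNReal.ofReal (F s * G (t - s))
        ≤ ∫⁻ s in Ioc (0:ℝ) a, ENNReal.ofReal (F s) *
            ENNReal.ofReal (K * ((1 - p) * t) ^ (-(3:ℝ)/2)) := by
          refine setLIntegral_mono (hmF.ennreal_ofReal.mul_const _) fun s hs => ?_
          rw [← ENNReal.ofReal_mul (hnnF s)]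
          exact ENNReal.ofReal_le_ofReal (hba s hs)
      _ = (∫⁻ s in Ioc (0:ℝ) a, ENNReal.ofReal (F s)) *
            ENNReal.ofReal (K * ((1 - p) * t) ^ (-(3:ℝ)/2)) :=
          lintegral_mul_const _ hmF.ennreal_ofReal
      _ ≤ 1 * ENNReal.ofReal (K * ((1 - p) * t) ^ (-(3:ℝ)/2)) :=
          mul_le_mul_left
            ((lintegral_mono_set (fun x hx => hx.1)).trans hmassF) _
      _ = ENNReal.ofReal (K * ((1 - p) * t) ^ (-(3:ℝ)/2)) := one_mul _
  have h2 : ∫⁻ s in Ioc a t, ENNReal.ofReal (F s * G (t - s)) ≤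
      ENNReal.ofReal ((K * c) * (p * t) ^ (-(3:ℝ)/2)) := by
    have hFb : ∀ s ∈ Ioc a t, F s ≤ (K * c) * a ^ (-(3:ℝ)/2) := by
      intro s hs
      have hs0 : 0 < s := lt_trans ha0 hs.1
      refine (hbF s hs0).trans ?_
      exact mul_le_mul_of_nonneg_left
        (Real.rpow_le_rpow_of_nonpos ha0 hs.1.le (by norm_num)) (mul_nonneg hK hc)
    have hcnn : 0 ≤ (K * c) * a ^ (-(3:ℝ)/2) :=
      mul_nonneg (mul_nonneg hK hc) (Real.rpow_nonneg ha0.le _)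
    calc ∫⁻ s in Ioc a t, ENNReal.ofReal (F s * G (t - s))
        ≤ ∫⁻ s in Ioc a t, ENNReal.ofReal ((K * c) * a ^ (-(3:ℝ)/2)) *
            ENNReal.ofReal (G (t - s)) := by
          refine setLIntegral_mono
            (measurable_const.mul
              ((hm.comp (measurable_const.sub measurable_id)).ennreal_ofReal))
            fun s hs => ?_
          rw [← ENNReal.ofReal_mul hcnn]
          exact ENNReal.ofReal_le_ofReal
            (mul_le_mul_of_nonneg_right (hFb s hs) (hnn _))
      _ = ENNReal.ofReal ((K * c) * a ^ (-(3:ℝ)/2)) *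
            ∫⁻ s in Ioc a t, ENNReal.ofReal (G (t - s)) :=
          lintegral_const_mul _
            ((hm.comp (measurable_const.sub measurable_id)).ennreal_ofReal)
      _ ≤ ENNReal.ofReal ((K * c) * a ^ (-(3:ℝ)/2)) * 1 :=
          mul_le_mul_right (reflect_le hm hz hint t a) _
      _ = ENNReal.ofReal ((K * c) * (p * t) ^ (-(3:ℝ)/2)) := by
          rw [mul_one]
  calc (∫⁻ s in Ioc (0:ℝ) a, ENNReal.ofReal (F s * G (t - s))) +
        ∫⁻ s in Ioc a t, ENNReal.ofReal (F s * G (t - s))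
      ≤ ENNReal.ofReal (K * ((1 - p) * t) ^ (-(3:ℝ)/2)) +
        ENNReal.ofReal ((K * c) * (p * t) ^ (-(3:ℝ)/2)) := add_le_add h1 h2
    _ = ENNReal.ofReal (K * ((1 - p) * t) ^ (-(3:ℝ)/2) +
        (K * c) * (p * t) ^ (-(3:ℝ)/2)) := (ENNReal.ofReal_add hX hY).symm

end

end ConvAux

/-- Final step in the proof of Lemma 3.8: if `G` is nonnegative, vanishes on `(-∞,0)`,
has integral one, and `G t ≤ K t^(-3/2)`, then the `n`-th convolution power satisfies
`G^{∗n}(t) ≤ K n^{5/2} t^{-3/2}` for every `n ≥ 1` (here `convPow G n = G^{∗(n+1)}`). -/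
theorem convolution_power_bound (K : ℝ) (hK : 0 ≤ K)
    (G : ℝ → ℝ) (hm : Measurable G) (hnn : ∀ t, 0 ≤ G t)
    (hz : ∀ t < (0:ℝ), G t = 0)
    (hint : ∫⁻ t in Ioi (0:ℝ), ENNReal.ofReal (G t) = 1)
    (hb : ∀ t, 0 < t → G t ≤ K * t ^ (-(3:ℝ)/2)) :
    ∀ n : ℕ, ∀ t : ℝ, 0 < t →
      convPow G n t ≤ K * ((n + 1 : ℕ) : ℝ) ^ ((5:ℝ)/2) * t ^ (-(3:ℝ)/2) := by
  suffices H : ∀ n : ℕ, Measurable (convPow G n) ∧ (∀ u, 0 ≤ convPow G n u) ∧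
      (∀ u < (0:ℝ), convPow G n u = 0) ∧
      (∫⁻ u in Ioi (0:ℝ), ENNReal.ofReal (convPow G n u) ≤ 1) ∧
      ∀ t : ℝ, 0 < t →
        convPow G n t ≤ K * ((n + 1 : ℕ) : ℝ) ^ ((5:ℝ)/2) * t ^ (-(3:ℝ)/2) by
    intro n t ht
    exact (H n).2.2.2.2 t ht
  intro n
  induction n with
  | zero =>
    refine ⟨hm, hnn, hz, le_of_eq hint, fun t ht => ?_⟩
    have := hb t ht
    simpa [convPow] using this
  | succ n ih =>
    obtain ⟨hmF, hnnF, hzF, hmassF, hbF⟩ := ih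
    have hc : (0:ℝ) ≤ ((n + 1 : ℕ) : ℝ) ^ ((5:ℝ)/2) :=
      Real.rpow_nonneg (by positivity) _
    refine ⟨ConvAux.conv_measurable hm hz hint hmF hzF,
      ConvAux.conv_nonneg' hm hz hint hnn hnnF hzF,
      fun u hu => ConvAux.conv_neg hm hz hint hzF hu,
      ConvAux.conv_mass hm hz hint hnn hmF hnnF hmassF, ?_⟩
    intro t ht
    set N : ℝ := (n : ℝ) + 1 with hN_def
    set M : ℝ := (n : ℝ) + 2 with hM_def
    have hN : (0:ℝ) < N := by rw [hN_def]; positivity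
    have hM : (0:ℝ) < M := by rw [hM_def]; positivity
    have hNM : (1:ℝ) + N = M := by rw [hN_def, hM_def]; ring
    have hp0 : 0 < N / M := div_pos hN hM
    have hp1 : N / M < 1 := by rw [div_lt_one hM]; linarith
    have hcastN : ((n + 1 : ℕ) : ℝ) = N := by rw [hN_def]; push_cast; ring
    have hbF' : ∀ u, 0 < u → convPow G n u ≤
        K * N ^ ((5:ℝ)/2) * u ^ (-(3:ℝ)/2) := by
      intro u hu
      have := hbF u hu
      rwa [hcastN] at this
    have hc' : (0:ℝ) ≤ N ^ ((5:ℝ)/2) := Real.rpow_nonneg hN.le _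
    have hmain := ConvAux.conv_bound (G := G) hm hz hint hnn hK hc' hmF hnnF hmassF
      hbF' hb ht hp0 hp1
    have h1mp : 1 - N / M = M⁻¹ := by
      rw [eq_comm, inv_eq_one_div, div_eq_iff hM.ne', sub_mul,
        div_mul_cancel₀ _ hM.ne']
      linarith
    have e1 : ((1 - N / M) * t) ^ (-(3:ℝ)/2)
        = M ^ ((3:ℝ)/2) * t ^ (-(3:ℝ)/2) := by
      rw [h1mp, Real.mul_rpow (inv_nonneg.2 hM.le) ht.le,
        Real.inv_rpow hM.le, ← Real.rpow_neg hM.le]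
      norm_num
    have e2 : ((N / M) * t) ^ (-(3:ℝ)/2)
        = N ^ (-(3:ℝ)/2) * M ^ ((3:ℝ)/2) * t ^ (-(3:ℝ)/2) := by
      rw [div_eq_mul_inv,
        Real.mul_rpow (mul_nonneg hN.le (inv_nonneg.2 hM.le)) ht.le,
        Real.mul_rpow hN.le (inv_nonneg.2 hM.le),
        Real.inv_rpow hM.le, ← Real.rpow_neg hM.le]
      norm_num
    have e3 : N ^ ((5:ℝ)/2) * N ^ (-(3:ℝ)/2) = N := by
      rw [← Real.rpow_add hN]
      norm_num
    have e4 : M ^ ((3:ℝ)/2) * M = M ^ ((5:ℝ)/2) := by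
      rw [← Real.rpow_add_one hM.ne']
      norm_num
    have key : K * ((1 - N / M) * t) ^ (-(3:ℝ)/2)
        + (K * N ^ ((5:ℝ)/2)) * ((N / M) * t) ^ (-(3:ℝ)/2)
        = K * M ^ ((5:ℝ)/2) * t ^ (-(3:ℝ)/2) := by
      rw [e1, e2, ← e4]
      linear_combination (K * M ^ ((3:ℝ)/2) * t ^ (-(3:ℝ)/2)) * e3 +
        (K * M ^ ((3:ℝ)/2) * t ^ (-(3:ℝ)/2)) * hNM
    have hcastM : ((n + 1 + 1 : ℕ) : ℝ) = M := by rw [hM_def]; push_cast; ring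
    rw [hcastM]
    calc convPow G (n + 1) t
        = conv (convPow G n) G t := rfl
      _ ≤ K * ((1 - N / M) * t) ^ (-(3:ℝ)/2)
          + (K * N ^ ((5:ℝ)/2)) * ((N / M) * t) ^ (-(3:ℝ)/2) := hmain
      _ = K * M ^ ((5:ℝ)/2) * t ^ (-(3:ℝ)/2) := key
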